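/- For every λ > 0, the equation λ(1 − e^{−K})/K = K has a unique positive solution K(λ); moreover the real map f(K) = λ(1 − e^{−K})/K on (0,∞) has no periodic points of proper period 2: f(f(K)) = K implies f(K) = K. -/

import Mathlib

theorem stmt_18 (lam : ℝ) (hlam : 0 < lam) :
    (∃! K : ℝ, 0 < K ∧ lam * (1 - Real.exp (-K)) / K = K) ∧
    (∀ K : ℝ, 0 < K →
      (fun J => lam * (1 - Real.exp (-J)) / J)
          ((fun J => lam * (1 - Real.exp (-J)) / J) K) = K →
      lam * (1 - Real.exp (-K)) / K = K) := by
  set H : ℝ → ℝ := fun x => lam * (1 - Real.exp (-x)) - x ^ 2 with hHdef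
  have hd1 : ∀ x : ℝ, HasDerivAt H (lam * Real.exp (-x) - 2 * x) x := by
    intro x
    have h1 : HasDerivAt (fun y : ℝ => Real.exp (-y)) (Real.exp (-x) * (-1)) x :=
      (hasDerivAt_neg x).exp
    have h2 := ((h1.const_sub 1).const_mul lam).sub (hasDerivAt_pow 2 x)
    exact h2.congr_deriv (by norm_num)
  have hderiv : deriv H = fun x => lam * Real.exp (-x) - 2 * x :=
    funext fun x => (hd1 x).deriv
  have hd2 : ∀ x : ℝ, HasDerivAt (fun y => lam * Real.exp (-y) - 2 * y)
      (lam * (Real.exp (-x) * (-1)) - 2) x := by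
    intro x
    have h1 : HasDerivAt (fun y : ℝ => Real.exp (-y)) (Real.exp (-x) * (-1)) x :=
      (hasDerivAt_neg x).exp
    exact ((h1.const_mul lam).sub ((hasDerivAt_id x).const_mul 2)).congr_deriv (by ring)
  have hcont : Continuous H := by fun_prop
  have hconc : StrictConcaveOn ℝ Set.univ H := by
    apply strictConcaveOn_of_deriv2_neg convex_univ hcont.continuousOn
    intro x _
    have h2 : deriv^[2] H x = lam * (Real.exp (-x) * (-1)) - 2 := by
      rw [show (2:ℕ) = 1 + 1 from rfl, Function.iterate_succ, Function.iterate_one,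
        Function.comp_apply, hderiv, (hd2 x).deriv]
    rw [h2]
    nlinarith [mul_pos hlam (Real.exp_pos (-x))]
  have hH0 : H 0 = 0 := by simp [hHdef]
  -- uniqueness of positive zero of H
  have key : ∀ x y : ℝ, 0 < x → H x = 0 → H y = 0 → x < y → False := by
    intro x y hx hHx hHy hxy
    have hy : 0 < y := hx.trans hxy
    have hb : 0 < x / y := div_pos hx hy
    have hb1 : x / y < 1 := (div_lt_one hy).mpr hxy
    have ha : 0 < 1 - x / y := by linarith
    have hcomb : (1 - x / y) * (0:ℝ) + (x / y) * y = x := by field_simp; ring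
    have hlt := hconc.2 (Set.mem_univ (0:ℝ)) (Set.mem_univ y) hy.ne
      ha hb (by ring)
    rw [smul_eq_mul, smul_eq_mul, smul_eq_mul, smul_eq_mul, hcomb, hH0, hHy, hHx] at hlt
    simp at hlt
  have huniq : ∀ x y : ℝ, 0 < x → 0 < y → H x = 0 → H y = 0 → x = y := by
    intro x y hx hy hHx hHy
    rcases lt_trichotomy x y with h | h | h
    · exact absurd h (fun h => key x y hx hHx hHy h)
    · exact h
    · exact absurd h (fun h => key y x hy hHy hHx h)
  -- existence of a positive zero
  have hexists : ∃ K : ℝ, 0 < K ∧ H K = 0 := by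
    set a : ℝ := min lam 1 / 2 with hadef
    have ha0 : 0 < a := by positivity
    have ha1 : a ≤ 1 / 2 := by
      have := min_le_right lam 1; simp only [hadef]; linarith
    have ha2 : 2 * a ≤ lam := by
      have := min_le_left lam 1; simp only [hadef]; linarith
    have hHa : 0 < H a := by
      have h1 : Real.exp (-a) * (1 + a) < 1 := by
        have h2 : a + 1 < Real.exp a := Real.add_one_lt_exp ha0.ne'
        have h3 : Real.exp (-a) * Real.exp a = 1 := by
          rw [← Real.exp_add]; simp
        nlinarith [Real.exp_pos (-a)]
      simp only [hHdef]
      nlinarith [Real.exp_pos (-a)]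
    have hHb : H (lam + 1) < 0 := by
      simp only [hHdef]
      nlinarith [Real.exp_pos (-(lam + 1))]
    have hab : a ≤ lam + 1 := by linarith
    have := intermediate_value_Ioo' hab hcont.continuousOn
    obtain ⟨K, hK1, hK2⟩ := this ⟨hHb, hHa⟩
    exact ⟨K, ha0.trans hK1.1, hK2⟩
  -- translate between H K = 0 and fixed point equation
  have htrans : ∀ K : ℝ, 0 < K → (lam * (1 - Real.exp (-K)) / K = K ↔ H K = 0) := by
    intro K hK
    rw [div_eq_iff hK.ne']
    simp only [hHdef]
    constructor <;> intro h <;> nlinarith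
  constructor
  · obtain ⟨K, hK, hHK⟩ := hexists
    refine ⟨K, ⟨hK, (htrans K hK).mpr hHK⟩, ?_⟩
    rintro y ⟨hy, hfy⟩
    exact huniq y K hy hK ((htrans y hy).mp hfy) hHK
  · intro K hK hKK
    simp only at hKK
    set L : ℝ := lam * (1 - Real.exp (-K)) / K with hL
    have hexpK : Real.exp (-K) < 1 := by
      rw [Real.exp_lt_one_iff]; linarith
    have hLpos : 0 < L := div_pos (mul_pos hlam (by linarith)) hK
    have e1 : lam * (1 - Real.exp (-L)) = K * L := (div_eq_iff hLpos.ne').mp hKK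
    have e2 : lam * (1 - Real.exp (-K)) = L * K := (div_eq_iff hK.ne').mp rfl
    have e3 : Real.exp (-L) = Real.exp (-K) := by
      have : lam * (1 - Real.exp (-L)) = lam * (1 - Real.exp (-K)) := by
        rw [e1, e2]; ring
      have := mul_left_cancel₀ hlam.ne' this
      linarith
    have : L = K := by
      have := Real.exp_injective e3
      linarith
    exact this
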